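/- Positive integers n−1 ≥ d_1 ≥ d_2 ≥ ⋯ ≥ d_n are the vertex degree sequence of a tricyclic graph (a connected simple graph on n vertices with n+2 edges) if and only if n ≥ 4, Σ_{i=1}^n d_i = 2(n+2), and one of the following holds: (1) n ≥ 5 and at least five of the d_i are ≥ 2 (i.e. d_5 ≥ 2); (2) at least four of the d_i are ≥ 3 (i.e. d_4 ≥ 3). -/

import Mathlib

set_option linter.unusedSectionVars false

open SimpleGraph Finset

section Helpers

lemma ncard_nbr {n : ℕ} (G : SimpleGraph (Fin n)) [DecidableRel G.Adj] (v : Fin n) :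
    (G.neighborSet v).ncard = G.degree v := by
  rw [Set.ncard_eq_toFinset_card', SimpleGraph.degree]
  congr 1

lemma sum_ge (d : ℕ → ℕ) (k n c : ℕ) (hkn : k ≤ n) (h : ∀ i, k ≤ i → i < n → c ≤ d i) :
    (∑ i ∈ range k, d i) + (n - k) * c ≤ ∑ i ∈ range n, d i := by
  rw [← Finset.sum_range_add_sum_Ico d hkn]
  have : (n - k) * c ≤ ∑ i ∈ Finset.Ico k n, d i := by
    calc (n-k) * c = (Finset.Ico k n).card * c := by rw [Nat.card_Ico]
    _ ≤ _ := Finset.card_nsmul_le_sum _ _ _ (fun i hi => by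
        rw [Finset.mem_Ico] at hi; exact h i hi.1 hi.2)
  omega

lemma sum_le' (d : ℕ → ℕ) (k n c : ℕ) (hkn : k ≤ n) (h : ∀ i, k ≤ i → i < n → d i ≤ c) :
    ∑ i ∈ range n, d i ≤ (∑ i ∈ range k, d i) + (n - k) * c := by
  rw [← Finset.sum_range_add_sum_Ico d hkn]
  have : ∑ i ∈ Finset.Ico k n, d i ≤ (n - k) * c := by
    calc ∑ i ∈ Finset.Ico k n, d i ≤ (Finset.Ico k n).card * c :=
      Finset.sum_le_card_nsmul _ _ _ (fun i hi => by
        rw [Finset.mem_Ico] at hi; exact h i hi.1 hi.2)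
    _ = (n-k)*c := by rw [Nat.card_Ico]
  omega

lemma walk_closed {V : Type*} {G : SimpleGraph V} {S : Set V}
    (hS : ∀ a b, a ∈ S → G.Adj a b → b ∈ S) {y x : V} (w : G.Walk y x) (hy : y ∈ S) : x ∈ S := by
  induction w with
  | nil => exact hy
  | cons h _ ih => exact ih (hS _ _ hy h)

def extendPerm {m : ℕ} (σ : Equiv.Perm (Fin m)) : Equiv.Perm (Fin (m+1)) :=
  (finSuccEquivLast.trans σ.optionCongr).trans finSuccEquivLast.symm

@[simp] lemma extendPerm_castSucc {m : ℕ} (σ : Equiv.Perm (Fin m)) (i : Fin m) :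
    extendPerm σ i.castSucc = (σ i).castSucc := by
  simp [extendPerm]

@[simp] lemma extendPerm_last {m : ℕ} (σ : Equiv.Perm (Fin m)) :
    extendPerm σ (Fin.last m) = Fin.last m := by
  simp [extendPerm]

end Helpers

def pendant (G : SimpleGraph (Fin m)) (w : Fin m) : SimpleGraph (Fin (m+1)) where
  Adj a b := (∃ (ha : a.val < m) (hb : b.val < m), G.Adj ⟨a.val, ha⟩ ⟨b.val, hb⟩) ∨
    (a = Fin.last m ∧ b = w.castSucc) ∨ (b = Fin.last m ∧ a = w.castSucc)
  symm := by
    constructor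
    rintro a b (⟨ha, hb, h⟩ | h | h)
    · exact Or.inl ⟨hb, ha, h.symm⟩
    · exact Or.inr (Or.inr h)
    · exact Or.inr (Or.inl h)
  loopless := by
    constructor
    rintro a (⟨ha, hb, h⟩ | ⟨h1, h2⟩ | ⟨h1, h2⟩)
    · exact G.loopless.irrefl _ h
    · subst h1; have := w.castSucc_lt_last; rw [← h2] at this; exact absurd rfl this.ne'
    · subst h1; have := w.castSucc_lt_last; rw [← h2] at this; exact absurd rfl this.ne'

variable {G : SimpleGraph (Fin m)} {w : Fin m}

lemma pendant_adj_cast {a b : Fin m} : (pendant G w).Adj a.castSucc b.castSucc ↔ G.Adj a b := by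
  constructor
  · rintro (⟨ha, hb, h⟩ | ⟨h1, _⟩ | ⟨h1, _⟩)
    · have e1 : (⟨(a.castSucc : Fin (m+1)).val, ha⟩ : Fin m) = a := Fin.ext rfl
      have e2 : (⟨(b.castSucc : Fin (m+1)).val, hb⟩ : Fin m) = b := Fin.ext rfl
      rwa [e1, e2] at h
    · exact absurd h1 a.castSucc_lt_last.ne
    · exact absurd h1 b.castSucc_lt_last.ne
  · intro h
    refine Or.inl ⟨a.castSucc_lt_last, b.castSucc_lt_last, ?_⟩
    have e1 : (⟨(a.castSucc : Fin (m+1)).val, a.castSucc_lt_last⟩ : Fin m) = a := Fin.ext rfl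
    have e2 : (⟨(b.castSucc : Fin (m+1)).val, b.castSucc_lt_last⟩ : Fin m) = b := Fin.ext rfl
    rwa [e1, e2]

lemma pendant_adj_cast_last {a : Fin m} : (pendant G w).Adj a.castSucc (Fin.last m) ↔ a = w := by
  constructor
  · rintro (⟨ha, hb, h⟩ | ⟨h1, _⟩ | ⟨_, h2⟩)
    · exact absurd hb (by simp)
    · exact absurd h1 a.castSucc_lt_last.ne
    · exact Fin.castSucc_injective _ h2
  · rintro rfl
    exact Or.inr (Or.inr ⟨rfl, rfl⟩)

lemma pendant_adj_last {b : Fin m} : (pendant G w).Adj (Fin.last m) b.castSucc ↔ b = w :=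
  (pendant G w).adj_comm _ _ |>.trans pendant_adj_cast_last

section PendantDeg
variable [DecidableRel G.Adj] [DecidableRel (pendant G w).Adj]

lemma pendant_nbrFinset_cast (a : Fin m) :
    (pendant G w).neighborFinset a.castSucc =
      (G.neighborFinset a).map Fin.castSuccEmb ∪ (if a = w then {Fin.last m} else ∅) := by
  ext b
  induction b using Fin.lastCases with
  | last =>
    simp only [mem_neighborFinset, pendant_adj_cast_last, Finset.mem_union, Finset.mem_map]
    constructor
    · rintro rfl; right; simp
    · rintro (⟨x, _, hx⟩ | hb)
      · exact absurd hx x.castSucc_lt_last.ne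
      · by_cases h : a = w
        · exact h
        · simp [h] at hb
  | cast b =>
    simp only [mem_neighborFinset, pendant_adj_cast, Finset.mem_union, Finset.mem_map]
    constructor
    · intro h
      left
      exact ⟨b, by simpa using h, rfl⟩
    · rintro (⟨x, hx, hxe⟩ | hb)
      · have : x = b := Fin.castSucc_injective _ hxe
        subst this; simpa using hx
      · by_cases h : a = w <;> simp [h] at hb

lemma pendant_degree_cast (a : Fin m) :
    (pendant G w).degree a.castSucc = G.degree a + (if a = w then 1 else 0) := by
  rw [SimpleGraph.degree, pendant_nbrFinset_cast]
  rw [Finset.card_union_of_disjoint]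
  · rw [Finset.card_map]
    congr 1
    by_cases h : a = w <;> simp [h]
  · by_cases h : a = w <;> simp [h]

lemma pendant_nbrFinset_last :
    (pendant G w).neighborFinset (Fin.last m) = {w.castSucc} := by
  ext b
  induction b using Fin.lastCases with
  | last => simp [mem_neighborFinset, (pendant G w).loopless, (Fin.castSucc_lt_last w).ne']
  | cast b =>
    simp only [mem_neighborFinset, pendant_adj_last, Finset.mem_singleton]
    exact ⟨fun h => by rw [h], fun h => Fin.castSucc_injective _ h⟩

lemma pendant_degree_last : (pendant G w).degree (Fin.last m) = 1 := by
  rw [SimpleGraph.degree, pendant_nbrFinset_last, Finset.card_singleton]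

end PendantDeg

def pendantHom (G : SimpleGraph (Fin m)) (w : Fin m) : G →g (pendant G w) :=
  ⟨Fin.castSucc, fun h => pendant_adj_cast.mpr h⟩

@[simp] lemma pendantHom_apply (a : Fin m) : pendantHom G w a = a.castSucc := rfl

lemma pendant_connected (hG : G.Connected) : (pendant G w).Connected := by
  rw [connected_iff]
  refine ⟨?_, ⟨Fin.last m⟩⟩
  intro x y
  have key : ∀ a : Fin m, (pendant G w).Reachable a.castSucc (Fin.last m) := by
    intro a
    have h1 := Reachable.map (pendantHom G w) (hG.preconnected a w)
    have e1 : pendantHom G w a = a.castSucc := rfl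
    have e2 : pendantHom G w w = w.castSucc := rfl
    rw [e1, e2] at h1
    exact h1.trans (Adj.reachable (by exact pendant_adj_cast_last.mpr rfl))
  induction x using Fin.lastCases with
  | last =>
    induction y using Fin.lastCases with
    | last => exact Reachable.refl _
    | cast y => exact (key y).symm
  | cast x =>
    induction y using Fin.lastCases with
    | last => exact key x
    | cast y => exact (key x).trans (key y).symm

def subdiv (G : SimpleGraph (Fin m)) (u v : Fin m) : SimpleGraph (Fin (m+1)) where
  Adj a b := (∃ (ha : a.val < m) (hb : b.val < m), G.Adj ⟨a.val, ha⟩ ⟨b.val, hb⟩ ∧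
      ¬((⟨a.val, ha⟩ : Fin m) = u ∧ (⟨b.val, hb⟩ : Fin m) = v) ∧
      ¬((⟨a.val, ha⟩ : Fin m) = v ∧ (⟨b.val, hb⟩ : Fin m) = u)) ∨
    (a = Fin.last m ∧ (b = u.castSucc ∨ b = v.castSucc)) ∨
    (b = Fin.last m ∧ (a = u.castSucc ∨ a = v.castSucc))
  symm := by
    constructor
    rintro a b (⟨ha, hb, h, h1, h2⟩ | h | h)
    · exact Or.inl ⟨hb, ha, h.symm, fun ⟨x, y⟩ => h2 ⟨y, x⟩, fun ⟨x, y⟩ => h1 ⟨y, x⟩⟩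
    · exact Or.inr (Or.inr h)
    · exact Or.inr (Or.inl h)
  loopless := by
    constructor
    rintro a (⟨ha, hb, h, _, _⟩ | ⟨h1, h2 | h2⟩ | ⟨h1, h2 | h2⟩) <;>
      first
      | exact G.loopless.irrefl _ h
      | (subst h1; exact absurd h2.symm (Fin.castSucc_lt_last _).ne)

variable {G : SimpleGraph (Fin m)} {u v : Fin m}

lemma subdiv_adj_cast {a b : Fin m} : (subdiv G u v).Adj a.castSucc b.castSucc ↔
    (G.Adj a b ∧ ¬(a = u ∧ b = v) ∧ ¬(a = v ∧ b = u)) := by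
  have ea : ∀ (h : (a.castSucc : Fin (m+1)).val < m), (⟨(a.castSucc : Fin (m+1)).val, h⟩ : Fin m) = a :=
    fun _ => Fin.ext rfl
  have eb : ∀ (h : (b.castSucc : Fin (m+1)).val < m), (⟨(b.castSucc : Fin (m+1)).val, h⟩ : Fin m) = b :=
    fun _ => Fin.ext rfl
  constructor
  · rintro (⟨ha, hb, h, h1, h2⟩ | ⟨h1, _⟩ | ⟨h1, _⟩)
    · rw [ea ha, eb hb] at h h1 h2
      exact ⟨h, h1, h2⟩
    · exact absurd h1 a.castSucc_lt_last.ne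
    · exact absurd h1 b.castSucc_lt_last.ne
  · rintro ⟨h, h1, h2⟩
    refine Or.inl ⟨a.castSucc_lt_last, b.castSucc_lt_last, ?_⟩
    rw [ea a.castSucc_lt_last, eb b.castSucc_lt_last]
    exact ⟨h, h1, h2⟩

lemma subdiv_adj_cast_last {a : Fin m} :
    (subdiv G u v).Adj a.castSucc (Fin.last m) ↔ (a = u ∨ a = v) := by
  constructor
  · rintro (⟨_, hb, _⟩ | ⟨h1, _⟩ | ⟨_, h2 | h2⟩)
    · exact absurd hb (by simp)
    · exact absurd h1 a.castSucc_lt_last.ne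
    · exact Or.inl (Fin.castSucc_injective _ h2)
    · exact Or.inr (Fin.castSucc_injective _ h2)
  · rintro (rfl | rfl)
    · exact Or.inr (Or.inr ⟨rfl, Or.inl rfl⟩)
    · exact Or.inr (Or.inr ⟨rfl, Or.inr rfl⟩)

lemma subdiv_adj_last {a : Fin m} :
    (subdiv G u v).Adj (Fin.last m) a.castSucc ↔ (a = u ∨ a = v) :=
  ((subdiv G u v).adj_comm _ _).trans subdiv_adj_cast_last

lemma subdiv_comm : subdiv G u v = subdiv G v u := by
  ext a b
  constructor <;>
  · rintro (⟨ha, hb, h, h1, h2⟩ | ⟨h1, h2⟩ | ⟨h1, h2⟩)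
    · exact Or.inl ⟨ha, hb, h, h2, h1⟩
    · exact Or.inr (Or.inl ⟨h1, h2.symm⟩)
    · exact Or.inr (Or.inr ⟨h1, h2.symm⟩)

section SubdivDeg
variable [DecidableRel G.Adj] [DecidableRel (subdiv G u v).Adj]

lemma subdiv_nbrFinset_other {a : Fin m} (hau : a ≠ u) (hav : a ≠ v) :
    (subdiv G u v).neighborFinset a.castSucc = (G.neighborFinset a).map Fin.castSuccEmb := by
  ext b
  induction b using Fin.lastCases with
  | last =>
    simp only [mem_neighborFinset, subdiv_adj_cast_last, Finset.mem_map]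
    constructor
    · rintro (rfl | rfl) <;> simp_all
    · rintro ⟨x, _, hx⟩
      exact absurd hx x.castSucc_lt_last.ne
  | cast b =>
    simp only [mem_neighborFinset, subdiv_adj_cast, Finset.mem_map]
    constructor
    · rintro ⟨h, _, _⟩
      exact ⟨b, by simpa using h, rfl⟩
    · rintro ⟨x, hx, hxe⟩
      have : x = b := Fin.castSucc_injective _ hxe
      subst this
      exact ⟨by simpa using hx, fun ⟨h, _⟩ => hau h, fun ⟨h, _⟩ => hav h⟩

lemma subdiv_nbrFinset_u (huv : G.Adj u v) :
    (subdiv G u v).neighborFinset u.castSucc =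
      ((G.neighborFinset u).erase v).map Fin.castSuccEmb ∪ {Fin.last m} := by
  have hne : u ≠ v := huv.ne
  ext b
  induction b using Fin.lastCases with
  | last =>
    simp only [mem_neighborFinset, subdiv_adj_cast_last, Finset.mem_union, Finset.mem_map,
      Finset.mem_singleton]
    tauto
  | cast b =>
    simp only [mem_neighborFinset, subdiv_adj_cast, Finset.mem_union, Finset.mem_map,
      Finset.mem_singleton, Finset.mem_erase]
    constructor
    · rintro ⟨h, h1, h2⟩
      left
      exact ⟨b, ⟨by tauto, by simpa using h⟩, rfl⟩
    · rintro (⟨x, ⟨hxv, hx⟩, hxe⟩ | hb)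
      · have : x = b := Fin.castSucc_injective _ hxe
        subst this
        exact ⟨by simpa using hx, fun ⟨_, hbv⟩ => hxv hbv, fun ⟨hu, _⟩ => hne hu⟩
      · exact absurd hb b.castSucc_lt_last.ne

lemma subdiv_nbrFinset_last :
    (subdiv G u v).neighborFinset (Fin.last m) = {u.castSucc, v.castSucc} := by
  ext b
  induction b using Fin.lastCases with
  | last =>
    simp only [mem_neighborFinset, Finset.mem_insert, Finset.mem_singleton]
    constructor
    · intro h; exact absurd h ((subdiv G u v).loopless.irrefl _)
    · rintro (h | h) <;> exact absurd h.symm (Fin.castSucc_lt_last _).ne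
  | cast b =>
    simp only [mem_neighborFinset, subdiv_adj_last, Finset.mem_insert, Finset.mem_singleton]
    constructor
    · rintro (rfl | rfl)
      · exact Or.inl rfl
      · exact Or.inr rfl
    · rintro (h | h)
      · exact Or.inl (Fin.castSucc_injective _ h)
      · exact Or.inr (Fin.castSucc_injective _ h)

lemma subdiv_degree_other {a : Fin m} (hau : a ≠ u) (hav : a ≠ v) :
    (subdiv G u v).degree a.castSucc = G.degree a := by
  rw [SimpleGraph.degree, subdiv_nbrFinset_other hau hav, Finset.card_map]
  rfl

lemma subdiv_degree_u (huv : G.Adj u v) : (subdiv G u v).degree u.castSucc = G.degree u := by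
  rw [SimpleGraph.degree, subdiv_nbrFinset_u huv, Finset.card_union_of_disjoint, Finset.card_map,
    Finset.card_erase_of_mem (by simpa using huv), Finset.card_singleton]
  · have h1 : 1 ≤ G.degree u := by
      rw [← SimpleGraph.card_neighborFinset_eq_degree]
      exact Finset.card_pos.mpr ⟨v, by simpa using huv⟩
    have h2 : G.degree u = #(G.neighborFinset u) := rfl
    have h2 : G.degree u = #(G.neighborFinset u) := rfl
    omega
  · rw [Finset.disjoint_singleton_right, Finset.mem_map]
    rintro ⟨x, _, hx⟩
    exact absurd hx x.castSucc_lt_last.ne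

lemma subdiv_degree_last (huv : G.Adj u v) : (subdiv G u v).degree (Fin.last m) = 2 := by
  rw [SimpleGraph.degree, subdiv_nbrFinset_last, Finset.card_insert_of_notMem (by
    simp only [Finset.mem_singleton]
    exact fun h => huv.ne (Fin.castSucc_injective _ h)), Finset.card_singleton]

end SubdivDeg

lemma subdiv_ncard_other {a : Fin m} (hau : a ≠ u) (hav : a ≠ v) :
    ((subdiv G u v).neighborSet a.castSucc).ncard = (G.neighborSet a).ncard := by
  classical
  rw [ncard_nbr, ncard_nbr]
  exact subdiv_degree_other hau hav

lemma subdiv_ncard_u (huv : G.Adj u v) :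
    ((subdiv G u v).neighborSet u.castSucc).ncard = (G.neighborSet u).ncard := by
  classical
  rw [ncard_nbr, ncard_nbr]
  exact subdiv_degree_u huv

lemma subdiv_ncard_v (huv : G.Adj u v) :
    ((subdiv G u v).neighborSet v.castSucc).ncard = (G.neighborSet v).ncard := by
  rw [subdiv_comm]
  classical
  rw [ncard_nbr, ncard_nbr]
  exact subdiv_degree_u huv.symm

lemma subdiv_ncard_last (huv : G.Adj u v) :
    ((subdiv G u v).neighborSet (Fin.last m)).ncard = 2 := by
  classical
  rw [ncard_nbr]
  exact subdiv_degree_last huv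

lemma subdiv_reach_cast (huv : G.Adj u v) {x y : Fin m} (w : G.Walk x y) :
    (subdiv G u v).Reachable x.castSucc y.castSucc := by
  induction w with
  | nil => exact Reachable.refl _
  | @cons a b c h p ih =>
    refine Reachable.trans ?_ ih
    by_cases h1 : a = u ∧ b = v
    · obtain ⟨rfl, rfl⟩ := h1
      exact (Adj.reachable (subdiv_adj_cast_last.mpr (Or.inl rfl))).trans
        (Adj.reachable (subdiv_adj_last.mpr (Or.inr rfl)))
    · by_cases h2 : a = v ∧ b = u
      · obtain ⟨rfl, rfl⟩ := h2
        exact (Adj.reachable (subdiv_adj_cast_last.mpr (Or.inr rfl))).trans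
          (Adj.reachable (subdiv_adj_last.mpr (Or.inl rfl)))
      · exact Adj.reachable (subdiv_adj_cast.mpr ⟨h, h1, h2⟩)

lemma subdiv_connected (huv : G.Adj u v) (hG : G.Connected) : (subdiv G u v).Connected := by
  rw [connected_iff]
  refine ⟨?_, ⟨Fin.last m⟩⟩
  have key : ∀ a : Fin m, (subdiv G u v).Reachable a.castSucc (Fin.last m) := fun a =>
    (subdiv_reach_cast huv (hG.preconnected a u).some).trans
      (Adj.reachable (subdiv_adj_cast_last.mpr (Or.inl rfl)))
  intro x y
  induction x using Fin.lastCases with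
  | last =>
    induction y using Fin.lastCases with
    | last => exact Reachable.refl _
    | cast y => exact (key y).symm
  | cast x =>
    induction y using Fin.lastCases with
    | last => exact key x
    | cast y => exact (key x).trans (key y).symm

lemma pendant_ncard_cast {G : SimpleGraph (Fin m)} {w : Fin m} (a : Fin m) :
    ((pendant G w).neighborSet a.castSucc).ncard =
      (G.neighborSet a).ncard + (if a = w then 1 else 0) := by
  classical
  rw [ncard_nbr, ncard_nbr]
  exact pendant_degree_cast a

lemma pendant_ncard_last {G : SimpleGraph (Fin m)} {w : Fin m} :
    ((pendant G w).neighborSet (Fin.last m)).ncard = 1 := by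
  classical
  rw [ncard_nbr]
  exact pendant_degree_last


-- Base graph constructor from a Boolean adjacency predicate
def mkGraph {N : ℕ} (f : Fin N → Fin N → Bool)
    (hsymm : ∀ a b, f a b = f b a) (hirr : ∀ a, f a a = false) : SimpleGraph (Fin N) where
  Adj a b := f a b
  symm := ⟨fun a b h => by show f b a = true; rw [hsymm]; exact h⟩
  loopless := ⟨fun a h => by change f a a = true at h; rw [hirr] at h; exact absurd h (by simp)⟩

instance {N : ℕ} (f : Fin N → Fin N → Bool) (h1) (h2) : DecidableRel (mkGraph f h1 h2).Adj :=
  fun a b => inferInstanceAs (Decidable (f a b = true))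

-- family 1 : degrees (6,2,2,2,2,2,2) on 7 vertices
def f1 (a b : Fin 7) : Bool :=
  (a,b) ∈ [((0:Fin 7),(1:Fin 7)),(0,2),(0,3),(0,4),(0,5),(0,6),(1,2),(3,4),(5,6)] ||
  (b,a) ∈ [((0:Fin 7),(1:Fin 7)),(0,2),(0,3),(0,4),(0,5),(0,6),(1,2),(3,4),(5,6)]
abbrev B1 : SimpleGraph (Fin 7) := mkGraph f1 (by decide) (by decide)
lemma B1_conn : B1.Connected := by rw [connected_iff]; exact ⟨by decide, by infer_instance⟩
lemma B1_deg : ∀ v : Fin 7, B1.degree v = if v.val = 0 then 6 else 2 := by decide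

-- family 2 : degrees (5,3,2,2,2,2) on 6 vertices
def f2 (a b : Fin 6) : Bool :=
  (a,b) ∈ [((0:Fin 6),(1:Fin 6)),(0,2),(2,1),(0,3),(3,1),(0,4),(4,5),(5,0)] ||
  (b,a) ∈ [((0:Fin 6),(1:Fin 6)),(0,2),(2,1),(0,3),(3,1),(0,4),(4,5),(5,0)]
abbrev B2 : SimpleGraph (Fin 6) := mkGraph f2 (by decide) (by decide)
lemma B2_conn : B2.Connected := by rw [connected_iff]; exact ⟨by decide, by infer_instance⟩
lemma B2_deg : ∀ v : Fin 6, B2.degree v = if v.val = 0 then 5 else if v.val = 1 then 3 else 2 := by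
  decide

-- family 3 : degrees (4,4,2,2,2) on 5 vertices
def f3 (a b : Fin 5) : Bool :=
  (a,b) ∈ [((0:Fin 5),(1:Fin 5)),(0,2),(2,1),(0,3),(3,1),(0,4),(4,1)] ||
  (b,a) ∈ [((0:Fin 5),(1:Fin 5)),(0,2),(2,1),(0,3),(3,1),(0,4),(4,1)]
abbrev B3 : SimpleGraph (Fin 5) := mkGraph f3 (by decide) (by decide)
lemma B3_conn : B3.Connected := by rw [connected_iff]; exact ⟨by decide, by infer_instance⟩
lemma B3_deg : ∀ v : Fin 5, B3.degree v = if v.val ≤ 1 then 4 else 2 := by decide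

-- family 4 : degrees (4,3,3,2,2) on 5 vertices
def f4 (a b : Fin 5) : Bool :=
  (a,b) ∈ [((0:Fin 5),(1:Fin 5)),(0,2),(1,2),(0,3),(3,1),(0,4),(4,2)] ||
  (b,a) ∈ [((0:Fin 5),(1:Fin 5)),(0,2),(1,2),(0,3),(3,1),(0,4),(4,2)]
abbrev B4 : SimpleGraph (Fin 5) := mkGraph f4 (by decide) (by decide)
lemma B4_conn : B4.Connected := by rw [connected_iff]; exact ⟨by decide, by infer_instance⟩
lemma B4_deg : ∀ v : Fin 5, B4.degree v = if v.val = 0 then 4 else if v.val ≤ 2 then 3 else 2 := by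
  decide

-- family 5 : degrees (3,3,3,3) on 4 vertices (K4)
def f5 (a b : Fin 4) : Bool := a ≠ b
abbrev B5 : SimpleGraph (Fin 4) := mkGraph f5 (by decide) (by decide)
lemma B5_conn : B5.Connected := by rw [connected_iff]; exact ⟨by decide, by infer_instance⟩
lemma B5_deg : ∀ v : Fin 4, B5.degree v = 3 := by decide

/-- `d` (0-indexed) is the degree sequence of `G`: some relabelling of the
vertices realizes the degrees `d 0, …, d (n-1)`. -/
def IsDegreeSequence {n : ℕ} (G : SimpleGraph (Fin n)) (d : ℕ → ℕ) : Prop :=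
  ∃ σ : Equiv.Perm (Fin n), ∀ i : Fin n, (G.neighborSet (σ i)).ncard = d (i : ℕ)

lemma isDegSeq_iff {n : ℕ} (G : SimpleGraph (Fin n)) [DecidableRel G.Adj] (d : ℕ → ℕ) :
    IsDegreeSequence G d ↔ ∃ σ : Equiv.Perm (Fin n), ∀ i : Fin n, G.degree (σ i) = d (i : ℕ) := by
  unfold IsDegreeSequence
  constructor <;> rintro ⟨σ, h⟩ <;> refine ⟨σ, fun i => ?_⟩
  · rw [← ncard_nbr]; exact h i
  · rw [ncard_nbr]; exact h i

lemma exists_adj_of_conn {N : ℕ} (hN : 2 ≤ N) (G : SimpleGraph (Fin N)) (hG : G.Connected) :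
    ∃ u v, G.Adj u v := by
  obtain ⟨w⟩ := hG.preconnected ⟨0, by omega⟩ ⟨1, by omega⟩
  cases w with
  | cons h _ => exact ⟨_, _, h⟩

lemma extend_to (d : ℕ → ℕ) (N n : ℕ) (hN : 2 ≤ N) (hNn : N ≤ n)
    (h2 : ∀ i, N ≤ i → i < n → d i = 2)
    (hbase : ∃ G : SimpleGraph (Fin N), G.Connected ∧ IsDegreeSequence G d) :
    ∃ G : SimpleGraph (Fin n), G.Connected ∧ IsDegreeSequence G d := by
  induction n, hNn using Nat.le_induction with
  | base => exact hbase
  | succ n hn ih =>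
    obtain ⟨G, hc, σ, hσ⟩ := ih (fun i hi hik => h2 i hi (by omega))
    obtain ⟨u, v, huv⟩ := exists_adj_of_conn (by omega) G hc
    refine ⟨subdiv G u v, subdiv_connected huv hc, extendPerm σ, fun i => ?_⟩
    induction i using Fin.lastCases with
    | last =>
      rw [extendPerm_last, subdiv_ncard_last huv]
      have := h2 n (by omega) (by omega)
      simp [this]
    | cast i =>
      rw [extendPerm_castSucc]
      have hval : ((i.castSucc : Fin (n+1)) : ℕ) = (i : ℕ) := rfl
      rw [hval]
      rcases eq_or_ne (σ i) u with he | hu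
      · rw [he, subdiv_ncard_u huv, ← he]; exact hσ i
      rcases eq_or_ne (σ i) v with he | hv
      · rw [he, subdiv_ncard_v huv, ← he]; exact hσ i
      · rw [subdiv_ncard_other hu hv]; exact hσ i

lemma build_min2 (n : ℕ) (d : ℕ → ℕ) (hn4 : 4 ≤ n)
    (hub : ∀ i, i < n → d i ≤ n - 1)
    (hmono : ∀ i j, i ≤ j → j < n → d j ≤ d i)
    (hpos2 : ∀ i, i < n → 2 ≤ d i)
    (hsum : ∑ i ∈ Finset.range n, d i = 2 * (n + 2)) :
    ∃ G : SimpleGraph (Fin n), G.Connected ∧ IsDegreeSequence G d := by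
  have hex5 : ∑ i ∈ Finset.range 5, d i = d 0 + d 1 + d 2 + d 3 + d 4 := by
    simp [Finset.sum_range_succ]
  have hex4 : ∑ i ∈ Finset.range 4, d i = d 0 + d 1 + d 2 + d 3 := by
    simp [Finset.sum_range_succ]
  have htail : ∀ i, 4 ≤ i → i < n → d i = 2 := by
    intro i h4 hin
    have h5n : 5 ≤ n := by omega
    have hd4 : d 4 ≤ 2 := by
      by_contra hcon
      push_neg at hcon
      have hge := sum_ge d 5 n 2 h5n (fun j h5 hj => hpos2 j hj)
      have h04 := hmono 0 4 (by omega) (by omega)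
      have h14 := hmono 1 4 (by omega) (by omega)
      have h24 := hmono 2 4 (by omega) (by omega)
      have h34 := hmono 3 4 (by omega) (by omega)
      omega
    have h1 := hmono 4 i h4 hin
    have h2 := hpos2 i hin
    omega
  have h12 : d 0 + d 1 + d 2 + d 3 = 12 := by
    rcases Nat.lt_or_ge n 5 with h | h
    · have hn : n = 4 := by omega
      rw [hn, hex4] at hsum
      omega
    · have hge := sum_ge d 4 n 2 (by omega) (fun j h4 hj => hpos2 j hj)
      have hle := sum_le' d 4 n 2 (by omega) (fun j h4 hj => (htail j h4 hj).le)
      rw [hex4] at hge hle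
      omega
  have m01 := hmono 0 1 (by omega) (by omega)
  have m12 := hmono 1 2 (by omega) (by omega)
  have m23 := hmono 2 3 (by omega) (by omega)
  have h3p := hpos2 3 (by omega)
  have hcases : (d 0 = 6 ∧ d 1 = 2 ∧ d 2 = 2 ∧ d 3 = 2) ∨ (d 0 = 5 ∧ d 1 = 3 ∧ d 2 = 2 ∧ d 3 = 2) ∨
      (d 0 = 4 ∧ d 1 = 4 ∧ d 2 = 2 ∧ d 3 = 2) ∨ (d 0 = 4 ∧ d 1 = 3 ∧ d 2 = 3 ∧ d 3 = 2) ∨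
      (d 0 = 3 ∧ d 1 = 3 ∧ d 2 = 3 ∧ d 3 = 3) := by omega
  rcases hcases with ⟨h0, h1, h2, h3⟩ | ⟨h0, h1, h2, h3⟩ | ⟨h0, h1, h2, h3⟩ |
    ⟨h0, h1, h2, h3⟩ | ⟨h0, h1, h2, h3⟩
  · -- (6,2,2,2,2,...)
    have hn7 : 7 ≤ n := by have := hub 0 (by omega); omega
    have t4 : d 4 = 2 := htail 4 (by omega) (by omega)
    have t5 : d 5 = 2 := htail 5 (by omega) (by omega)
    have t6 : d 6 = 2 := htail 6 (by omega) (by omega)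
    apply extend_to d 7 n (by omega) hn7 (fun i hi hin => htail i (by omega) hin)
    refine ⟨B1, B1_conn, (isDegSeq_iff _ _).mpr ⟨Equiv.refl _, fun i => ?_⟩⟩
    simp only [Equiv.refl_apply]
    refine (B1_deg i).trans ?_
    obtain ⟨iv, hiv⟩ := i
    interval_cases iv <;> simp [h0, h1, h2, h3, t4, t5, t6]
  · -- (5,3,2,2,...)
    have hn6 : 6 ≤ n := by have := hub 0 (by omega); omega
    have t4 : d 4 = 2 := htail 4 (by omega) (by omega)
    have t5 : d 5 = 2 := htail 5 (by omega) (by omega)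
    apply extend_to d 6 n (by omega) hn6 (fun i hi hin => htail i (by omega) hin)
    refine ⟨B2, B2_conn, (isDegSeq_iff _ _).mpr ⟨Equiv.refl _, fun i => ?_⟩⟩
    simp only [Equiv.refl_apply]
    refine (B2_deg i).trans ?_
    obtain ⟨iv, hiv⟩ := i
    interval_cases iv <;> simp [h0, h1, h2, h3, t4, t5]
  · -- (4,4,2,2,...)
    have hn5 : 5 ≤ n := by have := hub 0 (by omega); omega
    have t4 : d 4 = 2 := htail 4 (by omega) (by omega)
    apply extend_to d 5 n (by omega) hn5 (fun i hi hin => htail i (by omega) hin)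
    refine ⟨B3, B3_conn, (isDegSeq_iff _ _).mpr ⟨Equiv.refl _, fun i => ?_⟩⟩
    simp only [Equiv.refl_apply]
    refine (B3_deg i).trans ?_
    obtain ⟨iv, hiv⟩ := i
    interval_cases iv <;> simp [h0, h1, h2, h3, t4]
  · -- (4,3,3,2,...)
    have hn5 : 5 ≤ n := by have := hub 0 (by omega); omega
    have t4 : d 4 = 2 := htail 4 (by omega) (by omega)
    apply extend_to d 5 n (by omega) hn5 (fun i hi hin => htail i (by omega) hin)
    refine ⟨B4, B4_conn, (isDegSeq_iff _ _).mpr ⟨Equiv.refl _, fun i => ?_⟩⟩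
    simp only [Equiv.refl_apply]
    refine (B4_deg i).trans ?_
    obtain ⟨iv, hiv⟩ := i
    interval_cases iv <;> simp [h0, h1, h2, h3, t4]
  · -- (3,3,3,3,2,...)
    apply extend_to d 4 n (by omega) hn4 (fun i hi hin => htail i (by omega) hin)
    refine ⟨B5, B5_conn, (isDegSeq_iff _ _).mpr ⟨Equiv.refl _, fun i => ?_⟩⟩
    simp only [Equiv.refl_apply]
    refine (B5_deg i).trans ?_
    obtain ⟨iv, hiv⟩ := i
    interval_cases iv <;> simp [h0, h1, h2, h3]

lemma build (n : ℕ) : ∀ d : ℕ → ℕ,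
    (∀ i, i < n → 1 ≤ d i) → (∀ i, i < n → d i ≤ n - 1) →
    (∀ i j, i ≤ j → j < n → d j ≤ d i) → 4 ≤ n →
    (∑ i ∈ Finset.range n, d i = 2 * (n + 2)) →
    ((5 ≤ n ∧ 2 ≤ d 4) ∨ 3 ≤ d 3) →
    ∃ G : SimpleGraph (Fin n), G.Connected ∧ IsDegreeSequence G d := by
  induction n using Nat.strong_induction_on with
  | _ n IH =>
  intro d hpos hub hmono hn4 hsum hcond
  rcases Nat.lt_or_ge (d (n-1)) 2 with hlast | hmin2
  case inr =>
    exact build_min2 n d hn4 hub hmono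
      (fun i hin => le_trans hmin2 (hmono i (n-1) (by omega) (by omega))) hsum
  case inl =>
  have hl1 : d (n-1) = 1 := by have := hpos (n-1) (by omega); omega
  have h5n : 5 ≤ n := by
    by_contra h
    have hn : n = 4 := by omega
    rcases hcond with ⟨h5, _⟩ | h3
    · omega
    · have h3' : d (n-1) = 1 := hl1
      rw [show n-1 = 3 by omega] at h3'
      omega
  obtain ⟨m, rfl⟩ : ∃ m, n = m + 1 := ⟨n - 1, by omega⟩
  simp only [Nat.add_sub_cancel] at hl1
  have hm4 : 4 ≤ m := by omega
  have hsumm : ∑ i ∈ Finset.range m, d i = 2 * m + 5 := by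
    rw [Finset.sum_range_succ] at hsum; omega
  have hd0 : 3 ≤ d 0 := by
    by_contra hc
    push_neg at hc
    have hle := sum_le' d 0 (m+1) 2 (by omega)
      (fun k _ hk => le_trans (hmono 0 k (by omega) hk) (by omega))
    simp at hle
    omega
  have hex5 : ∑ i ∈ Finset.range 5, d i = d 0 + d 1 + d 2 + d 3 + d 4 := by
    simp [Finset.sum_range_succ]
  have hex4 : ∑ i ∈ Finset.range 4, d i = d 0 + d 1 + d 2 + d 3 := by
    simp [Finset.sum_range_succ]
  have hd1 : d 1 ≤ m - 1 := by
    by_contra hcon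
    push_neg at hcon
    have hub1 := hub 1 (by omega)
    have hd1m : d 1 = m := by omega
    have hd0m : m ≤ d 0 := hd1m ▸ hmono 0 1 (by omega) (by omega)
    rcases hcond with ⟨h5, hd4⟩ | h3
    · rcases Nat.lt_or_ge m 5 with hm5 | hm6
      · have hmeq : m = 4 := by omega
        rw [hmeq] at hl1; omega
      · have hge := sum_ge d 5 (m+1) 1 (by omega) (fun k h5' hk => hpos k hk)
        have h24 := hmono 2 4 (by omega) (by omega)
        have h34 := hmono 3 4 (by omega) (by omega)
        omega
    · have hge := sum_ge d 4 (m+1) 1 (by omega) (fun k h4' hk => hpos k hk)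
      have h23 := hmono 2 3 (by omega) (by omega)
      have h13 := hmono 1 3 (by omega) (by omega)
      omega
  classical
  set j := Nat.findGreatest (fun i => d i = d 0) (m-1) with hjdef
  have hjP : d j = d 0 := by
    rw [hjdef]
    exact Nat.findGreatest_spec (P := fun i => d i = d 0) (m := 0) (by omega) rfl
  have hjle : j ≤ m - 1 := by
    rw [hjdef]
    exact Nat.findGreatest_le (P := fun i => d i = d 0) _
  have hjmax : ∀ k, j < k → k ≤ m - 1 → d k ≠ d 0 := by
    intro k h1 h2
    rw [hjdef] at h1
    exact Nat.findGreatest_is_greatest (P := fun i => d i = d 0) h1 h2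
  set d' : ℕ → ℕ := fun i => if i = j then d i - 1 else d i with hd'def
  have hd'j : d' j = d 0 - 1 := by simp [hd'def, hjP]
  have hd'other : ∀ i, i ≠ j → d' i = d i := fun i h => by simp [hd'def, h]
  have hpos' : ∀ i, i < m → 1 ≤ d' i := by
    intro i him
    by_cases h : i = j
    · rw [h, hd'j]; omega
    · rw [hd'other i h]; exact hpos i (by omega)
  have hub' : ∀ i, i < m → d' i ≤ m - 1 := by
    intro i him
    by_cases h : i = j
    · rw [h, hd'j]
      have := hub 0 (by omega)
      omega
    · rw [hd'other i h]
      by_contra hc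
      push_neg at hc
      have hubi := hub i (by omega)
      have hdim : d i = m := by omega
      rcases Nat.eq_zero_or_pos i with hi0 | hip
      · subst hi0
        rcases Nat.eq_zero_or_pos j with hj0 | hjp
        · exact h (by omega)
        · have := hmono 1 j hjp (by omega)
          omega
      · have := hmono 1 i hip (by omega)
        omega
  have hmono' : ∀ i k, i ≤ k → k < m → d' k ≤ d' i := by
    intro i k hik hkm
    rcases Nat.eq_or_lt_of_le hik with rfl | hlt
    · exact le_refl _
    by_cases hkj : k = j
    · have hik2 := hmono i k hik (by omega)
      have hii : i ≠ j := by omega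
      rw [hd'other i hii]
      have hdk : d' k = d k - 1 := by simp [hd'def, hkj]
      omega
    · rw [hd'other k hkj]
      by_cases hij : i = j
      · have h1 : d' i = d 0 - 1 := by rw [hij]; exact hd'j
        have hk1 := hjmax k (by omega) (by omega)
        have hk2 := hmono j k (by omega) (by omega)
        rw [hjP] at hk2
        rw [h1]
        omega
      · rw [hd'other i hij]
        exact hmono i k hik (by omega)
  have hsum' : ∑ i ∈ Finset.range m, d' i = 2 * (m + 2) := by
    have key : ∀ i ∈ Finset.range m, d' i + (if i = j then 1 else 0) = d i := by
      intro i _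
      by_cases h : i = j
      · subst h; simp [hd'j, hjP]; omega
      · simp [hd'other i h, h]
    have hadd : (∑ i ∈ Finset.range m, d' i) + (∑ i ∈ Finset.range m, if i = j then 1 else 0)
        = ∑ i ∈ Finset.range m, d i := by
      rw [← Finset.sum_add_distrib]
      exact Finset.sum_congr rfl key
    have hite : (∑ i ∈ Finset.range m, if i = j then 1 else 0) = 1 := by
      rw [Finset.sum_ite_eq' (Finset.range m) j (fun _ => 1)]
      simp [Finset.mem_range]
      omega
    omega
  have hcond' : (5 ≤ m ∧ 2 ≤ d' 4) ∨ 3 ≤ d' 3 := by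
    rcases hcond with ⟨h5, hd4⟩ | hd3
    · have hm5 : 5 ≤ m := by
        by_contra hc
        have hmeq : m = 4 := by omega
        rw [hmeq] at hl1; omega
      left
      refine ⟨hm5, ?_⟩
      by_cases h4j : (4:ℕ) = j
      · have hx : d' 4 = d 0 - 1 := by rw [h4j]; exact hd'j
        have hy : d 4 = d 0 := by rw [h4j]; exact hjP
        omega
      · rw [hd'other 4 h4j]
        exact hd4
    · by_cases h3j : (3:ℕ) = j
      · have hd3d0 : d 3 = d 0 := by rw [h3j]; exact hjP
        rcases Nat.lt_or_ge (d 0) 4 with hlt4 | hge4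
        · have h03 : d 0 = 3 := by omega
          have h01 := hmono 0 1 (by omega) (by omega)
          have h13 := hmono 1 3 (by omega) (by omega)
          have h23 := hmono 2 3 (by omega) (by omega)
          have h12 := hmono 1 2 (by omega) (by omega)
          have hm5 : 5 ≤ m := by
            by_contra hc
            have hmeq : m = 4 := by omega
            have hs4 : ∑ i ∈ Finset.range 4, d i = 2 * 4 + 5 := by rw [← hmeq]; exact hsumm
            rw [hex4] at hs4
            have hl4 : d 4 = 1 := by rw [← hmeq]; exact hl1
            omega
          have h4ne : d 4 ≠ d 0 := hjmax 4 (by omega) (by omega)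
          have h4le := hmono 3 4 (by omega) (by omega)
          have h42 : d 4 = 2 := by
            by_contra hc
            have h41 : d 4 ≤ 1 := by omega
            have hle := sum_le' d 4 (m+1) 1 (by omega)
              (fun k h4' hk => le_trans (hmono 4 k h4' hk) h41)
            rw [hex4] at hle
            omega
          left
          refine ⟨hm5, ?_⟩
          rw [hd'other 4 (by omega)]
          omega
        · right
          have hx : d' 3 = d 0 - 1 := by rw [h3j]; exact hd'j
          omega
      · right
        rw [hd'other 3 h3j]
        exact hd3
  obtain ⟨G', hc', hds'⟩ := IH m (by omega) d' hpos' hub' hmono' hm4 hsum' hcond'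
  haveI : DecidableRel G'.Adj := Classical.decRel _
  obtain ⟨σ', hσ'⟩ := (isDegSeq_iff G' d').mp hds'
  have hjm : j < m := by omega
  set jf : Fin m := ⟨j, hjm⟩ with hjf
  set w := σ' jf with hw
  refine ⟨pendant G' w, pendant_connected hc', ?_⟩
  refine ⟨extendPerm σ', fun i => ?_⟩
  induction i using Fin.lastCases with
  | last =>
    rw [extendPerm_last, pendant_ncard_last]
    have : ((Fin.last m : Fin (m+1)) : ℕ) = m := rfl
    rw [this, hl1]
  | cast i =>
    rw [extendPerm_castSucc, pendant_ncard_cast]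
    have hval : ((i.castSucc : Fin (m+1)) : ℕ) = (i : ℕ) := rfl
    rw [hval]
    have hdi : (G'.neighborSet (σ' i)).ncard = d' (i : ℕ) := by
      rw [ncard_nbr]; exact hσ' i
    by_cases hij : i = jf
    · subst hij
      rw [if_pos rfl, hdi]
      have : (jf : ℕ) = j := rfl
      rw [this, hd'j]
      have : d j = d 0 := hjP
      have hjval : d (jf : ℕ) = d 0 := hjP
      omega
    · rw [if_neg (fun h => hij (σ'.injective h)), hdi,
        hd'other _ (fun hc => hij (Fin.ext hc))]
      omega

lemma edge_ncard_eq {n : ℕ} (G : SimpleGraph (Fin n)) [DecidableRel G.Adj] :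
    G.edgeSet.ncard = G.edgeFinset.card := by
  rw [Set.ncard_eq_toFinset_card']
  congr 1

lemma forward (n : ℕ) (d : ℕ → ℕ)
    (hpos : ∀ i, i < n → 1 ≤ d i)
    (hub : ∀ i, i < n → d i ≤ n - 1)
    (hmono : ∀ i j, i ≤ j → j < n → d j ≤ d i)
    (G : SimpleGraph (Fin n)) [DecidableRel G.Adj]
    (hconn : G.Connected) (hedge : G.edgeFinset.card = n + 2)
    (σ : Equiv.Perm (Fin n)) (hσ : ∀ i : Fin n, G.degree (σ i) = d (i : ℕ)) :
    4 ≤ n ∧ ∑ i ∈ Finset.range n, d i = 2 * (n + 2) ∧ ((5 ≤ n ∧ 2 ≤ d 4) ∨ 3 ≤ d 3) := by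
  have hn1 : 1 ≤ n := by
    obtain ⟨v⟩ := hconn.nonempty
    exact v.pos
  -- handshake
  have hsumdeg : ∑ i ∈ Finset.range n, d i = 2 * (n + 2) := by
    have h1 : ∑ i : Fin n, d (i : ℕ) = ∑ i ∈ Finset.range n, d i :=
      Fin.sum_univ_eq_sum_range d n
    have h2 : ∑ i : Fin n, G.degree (σ i) = ∑ i : Fin n, d (i : ℕ) :=
      Finset.sum_congr rfl (fun i _ => hσ i)
    have h3 : ∑ i : Fin n, G.degree (σ i) = ∑ v : Fin n, G.degree v :=
      Fintype.sum_equiv σ _ _ (fun i => rfl)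
    have h4 := G.sum_degrees_eq_twice_card_edges
    rw [hedge] at h4
    omega
  -- n ≥ 4
  have hn4 : 4 ≤ n := by
    have h := SimpleGraph.card_edgeFinset_le_card_choose_two (G := G)
    rw [hedge, Fintype.card_fin] at h
    by_contra hc
    push_neg at hc
    interval_cases n <;> simp [Nat.choose] at h
  refine ⟨hn4, hsumdeg, ?_⟩
  -- condition
  rcases Nat.lt_or_ge n 5 with h5 | h5
  · -- n = 4
    right
    have hn : n = 4 := by omega
    subst hn
    have hx : ∑ i ∈ Finset.range 4, d i = d 0 + d 1 + d 2 + d 3 := by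
      simp [Finset.sum_range_succ]
    have u0 := hub 0 (by omega)
    have u1 := hub 1 (by omega)
    have u2 := hub 2 (by omega)
    have u3 := hub 3 (by omega)
    omega
  · by_contra hcon
    push_neg at hcon
    obtain ⟨hc1, hc2⟩ := hcon
    have hd4 : d 4 ≤ 1 := by have := hc1 h5; omega
    have hd3 : d 3 ≤ 2 := by omega
    -- setup
    have hdeg : ∀ v : Fin n, G.degree v = d ((σ.symm v : Fin n) : ℕ) := by
      intro v
      have := hσ (σ.symm v)
      rwa [Equiv.apply_symm_apply] at this
    have hdeg1 : ∀ v : Fin n, 1 ≤ G.degree v := by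
      intro v
      rw [hdeg v]
      exact hpos _ (σ.symm v).isLt
    set A : Finset (Fin n) := Finset.univ.filter (fun v => 2 ≤ G.degree v) with hA
    set L : Finset (Fin n) := Finset.univ.filter (fun v => ¬ 2 ≤ G.degree v) with hL
    have hcardAL : A.card + L.card = n := by
      rw [hA, hL, Finset.card_filter_add_card_filter_not]
      exact Fintype.card_fin n
    have hLdeg : ∀ v ∈ L, G.degree v = 1 := by
      intro v hv
      rw [hL, Finset.mem_filter] at hv
      have := hdeg1 v
      omega
    have hLnbr : ∀ v ∈ L, ∃ u, G.neighborFinset v = {u} := by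
      intro v hv
      refine Finset.card_eq_one.mp ?_
      rw [G.card_neighborFinset_eq_degree v]
      exact hLdeg v hv
    classical
    set f : Fin n → Fin n :=
      fun v => if h : ∃ u, G.neighborFinset v = {u} then h.choose else v with hf
    have hfv : ∀ v ∈ L, G.neighborFinset v = {f v} := by
      intro v hv
      rw [hf]
      simp only [hLnbr v hv, dif_pos]
      exact (hLnbr v hv).choose_spec
    have hfadj : ∀ v ∈ L, G.Adj v (f v) := by
      intro v hv
      rw [← SimpleGraph.mem_neighborFinset, hfv v hv]
      exact Finset.mem_singleton_self _
    have hnoLL : ∀ v ∈ L, ∀ u ∈ L, ¬ G.Adj v u := by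
      intro v hv u hu hadj
      have hnv : G.neighborFinset v = {u} := by
        have h1 := hfv v hv
        have h2 : u ∈ G.neighborFinset v := (SimpleGraph.mem_neighborFinset _ _ _).mpr hadj
        rw [h1, Finset.mem_singleton] at h2
        rw [h1, h2]
      have hnu : G.neighborFinset u = {v} := by
        have h1 := hfv u hu
        have h2 : v ∈ G.neighborFinset u := (SimpleGraph.mem_neighborFinset _ _ _).mpr hadj.symm
        rw [h1, Finset.mem_singleton] at h2
        rw [h1, h2]
      -- find x outside {v, u}
      have hex : ∃ x : Fin n, x ≠ v ∧ x ≠ u := by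
        by_contra hcx
        push_neg at hcx
        have hsub : (Finset.univ : Finset (Fin n)) ⊆ {v, u} := by
          intro x _
          rcases eq_or_ne x v with rfl | hxv
          · simp
          · simp [hcx x hxv]
        have := Finset.card_le_card hsub
        have h2 := Finset.card_insert_le v ({u} : Finset (Fin n))
        have h3 : ({u} : Finset (Fin n)).card = 1 := Finset.card_singleton u
        simp [Fintype.card_fin] at this
        omega
      obtain ⟨x, hxv, hxu⟩ := hex
      have hclosed : ∀ a b : Fin n, a ∈ ({v, u} : Set (Fin n)) → G.Adj a b →
          b ∈ ({v, u} : Set (Fin n)) := by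
        rintro a b (rfl | rfl) hab
        · have : b ∈ G.neighborFinset a := (SimpleGraph.mem_neighborFinset _ _ _).mpr hab
          rw [hnv, Finset.mem_singleton] at this
          right; exact this
        · have : b ∈ G.neighborFinset a := (SimpleGraph.mem_neighborFinset _ _ _).mpr hab
          rw [hnu, Finset.mem_singleton] at this
          left; exact this
      obtain ⟨p⟩ := hconn.preconnected v x
      have := walk_closed hclosed p (by left; rfl)
      rcases this with h | h
      · exact hxv h
      · exact hxu h
    have hfA : ∀ v ∈ L, f v ∈ A := by
      intro v hv
      rw [hA, Finset.mem_filter]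
      refine ⟨Finset.mem_univ _, ?_⟩
      by_contra hc
      have hfL : f v ∈ L := by rw [hL, Finset.mem_filter]; exact ⟨Finset.mem_univ _, hc⟩
      exact hnoLL v hv (f v) hfL (hfadj v hv)
    have hLcount : L.card = ∑ v ∈ A, (L.filter (fun l => G.Adj v l)).card := by
      rw [Finset.card_eq_sum_card_fiberwise hfA]
      refine Finset.sum_congr rfl (fun v hv => ?_)
      congr 1
      ext l
      simp only [Finset.mem_filter]
      constructor
      · rintro ⟨hl, hfl⟩
        exact ⟨hl, hfl ▸ (hfadj l hl).symm⟩
      · rintro ⟨hl, hadj⟩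
        refine ⟨hl, ?_⟩
        have h2 : v ∈ G.neighborFinset l := (SimpleGraph.mem_neighborFinset _ _ _).mpr hadj.symm
        rw [hfv l hl, Finset.mem_singleton] at h2
        exact h2.symm
    have hdegbound : ∀ v ∈ A, G.degree v ≤ (A.card - 1) + (L.filter (fun l => G.Adj v l)).card := by
      intro v hv
      have hsub : G.neighborFinset v ⊆ (A.erase v) ∪ (L.filter (fun l => G.Adj v l)) := by
        intro b hb
        have hadj : G.Adj v b := (SimpleGraph.mem_neighborFinset _ _ _).mp hb
        rcases Nat.lt_or_ge (G.degree b) 2 with hdb | hdb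
        · refine Finset.mem_union_right _ ?_
          rw [Finset.mem_filter]
          exact ⟨by rw [hL, Finset.mem_filter]; exact ⟨Finset.mem_univ _, by omega⟩, hadj⟩
        · refine Finset.mem_union_left _ ?_
          rw [Finset.mem_erase]
          exact ⟨hadj.ne', by rw [hA, Finset.mem_filter]; exact ⟨Finset.mem_univ _, hdb⟩⟩
      calc G.degree v = (G.neighborFinset v).card := (G.card_neighborFinset_eq_degree v).symm
        _ ≤ ((A.erase v) ∪ (L.filter (fun l => G.Adj v l))).card := Finset.card_le_card hsub
        _ ≤ (A.erase v).card + (L.filter (fun l => G.Adj v l)).card := Finset.card_union_le _ _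
        _ = (A.card - 1) + (L.filter (fun l => G.Adj v l)).card := by
            rw [Finset.card_erase_of_mem hv]
    have hsumA : (∑ v ∈ A, G.degree v) + L.card = 2 * (n + 2) := by
      have h4 := G.sum_degrees_eq_twice_card_edges
      rw [hedge] at h4
      have hsplit : (∑ v ∈ A, G.degree v) + (∑ v ∈ L, G.degree v) = ∑ v : Fin n, G.degree v := by
        rw [hA, hL]
        exact Finset.sum_filter_add_sum_filter_not _ _ _
      have hLsum : ∑ v ∈ L, G.degree v = L.card := by
        rw [Finset.card_eq_sum_ones]
        exact Finset.sum_congr rfl (fun v hv => hLdeg v hv)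
      omega
    have hcardA : A.card ≤ 4 := by
      have := Finset.card_le_card_of_injOn (fun v => ((σ.symm v : Fin n) : ℕ))
        (s := A) (t := Finset.range 4) ?_ ?_
      · simpa using this
      · intro v hv
        rw [hA, Finset.mem_coe, Finset.mem_filter] at hv
        rw [Finset.mem_coe, Finset.mem_range]
        by_contra hge
        push_neg at hge
        have h1 := hmono 4 _ hge (σ.symm v).isLt
        rw [← hdeg v] at h1
        omega
      · intro a _ b _ hab
        have : σ.symm a = σ.symm b := Fin.ext hab
        exact σ.symm.injective this
    have hAbound : (∑ v ∈ A, G.degree v) ≤ A.card * (A.card - 1) + L.card := by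
      calc (∑ v ∈ A, G.degree v)
          ≤ ∑ v ∈ A, ((A.card - 1) + (L.filter (fun l => G.Adj v l)).card) :=
            Finset.sum_le_sum hdegbound
        _ = A.card * (A.card - 1) + ∑ v ∈ A, (L.filter (fun l => G.Adj v l)).card := by
            rw [Finset.sum_add_distrib, Finset.sum_const, smul_eq_mul]
        _ = A.card * (A.card - 1) + L.card := by rw [← hLcount]
    obtain ⟨a, haeq⟩ : ∃ a, A.card = a := ⟨_, rfl⟩
    rw [haeq] at hcardA hcardAL hAbound hdegbound
    have ha4 : a = 4 := by interval_cases a <;> omega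
    subst ha4
    -- equality case: every vertex of A has degree ≥ 3
    have hdegA : ∀ v ∈ A, 3 ≤ G.degree v := by
      by_contra hcA
      push_neg at hcA
      obtain ⟨v₀, hv₀, hdv₀⟩ := hcA
      have hstrict : (∑ v ∈ A, G.degree v) <
          ∑ v ∈ A, ((4 - 1) + (L.filter (fun l => G.Adj v l)).card) := by
        refine Finset.sum_lt_sum hdegbound ⟨v₀, hv₀, ?_⟩
        have := hdegbound v₀ hv₀
        omega
      have heq2 : ∑ v ∈ A, ((4 - 1) + (L.filter (fun l => G.Adj v l)).card)
          = 4 * 3 + L.card := by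
        rw [Finset.sum_add_distrib, Finset.sum_const, smul_eq_mul, ← hLcount, haeq]
      omega
    -- four vertices of degree ≥ 3 but at most three indices with d ≥ 3
    have hfinal := Finset.card_le_card_of_injOn (fun v => ((σ.symm v : Fin n) : ℕ))
      (s := A) (t := Finset.range 3) ?_ ?_
    · rw [haeq] at hfinal
      simp at hfinal
    · intro v hv
      rw [Finset.mem_coe, Finset.mem_range]
      by_contra hge
      push_neg at hge
      have h1 := hmono 3 _ hge (σ.symm v).isLt
      rw [← hdeg v] at h1
      have h2 := hdegA v hv
      omega
    · intro x _ y _ hxy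
      exact σ.symm.injective (Fin.ext hxy)

/-- Characterization of degree sequences of tricyclic graphs. -/
theorem tricyclic_degree_sequence_characterization (n : ℕ) (d : ℕ → ℕ)
    (hpos : ∀ i, i < n → 1 ≤ d i)
    (hub : ∀ i, i < n → d i ≤ n - 1)
    (hmono : ∀ i j, i ≤ j → j < n → d j ≤ d i) :
    (∃ G : SimpleGraph (Fin n),
        G.Connected ∧ G.edgeSet.ncard = n + 2 ∧ IsDegreeSequence G d) ↔
      (4 ≤ n ∧ ∑ i ∈ Finset.range n, d i = 2 * (n + 2) ∧ ((5 ≤ n ∧ 2 ≤ d 4) ∨ 3 ≤ d 3)) := by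
  constructor
  · rintro ⟨G, hconn, hedge, hds⟩
    haveI : DecidableRel G.Adj := Classical.decRel _
    obtain ⟨σ, hσ⟩ := (isDegSeq_iff G d).mp hds
    have hedge' : G.edgeFinset.card = n + 2 := by rw [← edge_ncard_eq]; exact hedge
    exact forward n d hpos hub hmono G hconn hedge' σ hσ
  · rintro ⟨hn4, hsum, hcond⟩
    obtain ⟨G, hconn, hds⟩ := build n d hpos hub hmono hn4 hsum hcond
    refine ⟨G, hconn, ?_, hds⟩
    haveI : DecidableRel G.Adj := Classical.decRel _
    rw [edge_ncard_eq]
    obtain ⟨σ, hσ⟩ := (isDegSeq_iff G d).mp hds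
    have h4 := G.sum_degrees_eq_twice_card_edges
    have h1 : ∑ i : Fin n, d (i : ℕ) = ∑ i ∈ Finset.range n, d i :=
      Fin.sum_univ_eq_sum_range d n
    have h2 : ∑ i : Fin n, G.degree (σ i) = ∑ i : Fin n, d (i : ℕ) :=
      Finset.sum_congr rfl (fun i _ => hσ i)
    have h3 : ∑ i : Fin n, G.degree (σ i) = ∑ v : Fin n, G.degree v :=
      Fintype.sum_equiv σ _ _ (fun i => rfl)
    omega
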